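/- In a finite MDP, if μ₀ is limit-sure eventually synchronizing in R with support in Z, and R = Pre^k(T), Z = Pre^k(U) with T ⊆ U, then μ₀ is limit-sure eventually synchronizing in T with support in U. -/

import Mathlib

open Finset

structure MDP (Q A : Type) [Fintype Q] [Fintype A] where
  δ : Q → A → Q → ℝ
  nonneg : ∀ q a q', 0 ≤ δ q a q'
  sum_one : ∀ q a, ∑ q', δ q a q' = 1

structure Strat (Q A : Type) [Fintype A] where
  σ : List Q → A → ℝ
  nonneg : ∀ h a, 0 ≤ σ h a
  sum_one : ∀ h, ∑ a, σ h a = 1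

variable {Q A : Type} [Fintype Q] [DecidableEq Q] [Fintype A]

/-- Probability of a path of length `n` (i.e. `n+1` states) from initial
distribution `μ0` under strategy `α`. The history passed to the strategy is
the list of visited states, most recent first. -/
noncomputable def pathProb (M : MDP Q A) (μ0 : Q → ℝ) (α : Strat Q A)
    {n : ℕ} (π : Fin (n + 1) → Q) : ℝ :=
  μ0 (π 0) *
    ∏ i : Fin n,
      ∑ a,
        α.σ (List.ofFn (fun j : Fin (i.1 + 1) =>
            π ⟨i.1 - j.1, lt_of_le_of_lt (Nat.sub_le i.1 j.1) (Nat.lt_succ_of_lt i.isLt)⟩)) a *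
          M.δ (π i.castSucc) a (π i.succ)

/-- Distribution over states after `n` steps. -/
noncomputable def Mdist (M : MDP Q A) (μ0 : Q → ℝ) (α : Strat Q A) (n : ℕ) (q : Q) : ℝ :=
  ∑ π : Fin (n + 1) → Q, if π (Fin.last n) = q then pathProb M μ0 α π else 0

/-- Probability mass in `T` after `n` steps. -/
noncomputable def Mmass (M : MDP Q A) (μ0 : Q → ℝ) (α : Strat Q A) (n : ℕ) (T : Finset Q) : ℝ :=
  ∑ q ∈ T, Mdist M μ0 α n q

open scoped Classical in
/-- Support of the transition `δ(q,a)`. -/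
noncomputable def post (M : MDP Q A) (q : Q) (a : A) : Finset Q :=
  Finset.univ.filter (fun q' => 0 < M.δ q a q')

open scoped Classical in
/-- One-step predecessor operator. -/
noncomputable def PreM (M : MDP Q A) (S : Finset Q) : Finset Q :=
  Finset.univ.filter (fun q => ∃ a, post M q a ⊆ S)

def IsDist (μ : Q → ℝ) : Prop := (∀ q, 0 ≤ μ q) ∧ ∑ q, μ q = 1

def dirac (q0 : Q) : Q → ℝ := fun q => if q = q0 then (1 : ℝ) else 0

def PureStrat (α : Strat Q A) : Prop := ∀ h, ∃ a, α.σ h a = 1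

set_option linter.unusedSectionVars false
set_option linter.unusedVariables false
set_option maxHeartbeats 1000000


/-- the history list seen by the strategy at the last step of a path `ρ`. -/
def histL {m : ℕ} (ρ : Fin (m + 1) → Q) : List Q :=
  List.ofFn (fun j : Fin (m + 1) => ρ ⟨m - j.1, by omega⟩)

lemma histL_length {m : ℕ} (ρ : Fin (m + 1) → Q) : (histL ρ).length = m + 1 := by
  simp [histL]

noncomputable def lhead [Nonempty Q] (h : List Q) : Q :=
  @List.headI Q ⟨Classical.arbitrary Q⟩ h

lemma lhead_cons [Nonempty Q] (a : Q) (l : List Q) : lhead (a :: l) = a := rfl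

lemma histL_lhead [Nonempty Q] {m : ℕ} (ρ : Fin (m + 1) → Q) :
    lhead (histL ρ) = ρ (Fin.last m) := by
  unfold histL
  rw [List.ofFn_succ, lhead_cons]
  exact congrArg ρ (Fin.ext (by simp [Fin.last]))

/-- the one-step transition kernel given a path prefix. -/
noncomputable def stepP (M : MDP Q A) (β : Strat Q A) {m : ℕ} (ρ : Fin (m + 1) → Q) (q : Q) : ℝ :=
  ∑ a, β.σ (histL ρ) a * M.δ (ρ (Fin.last m)) a q

lemma stepP_nonneg (M : MDP Q A) (β : Strat Q A) {m : ℕ} (ρ : Fin (m + 1) → Q) (q : Q) :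
    0 ≤ stepP M β ρ q :=
  Finset.sum_nonneg fun a _ => mul_nonneg (β.nonneg _ _) (M.nonneg _ _ _)

lemma sum_stepP (M : MDP Q A) (β : Strat Q A) {m : ℕ} (ρ : Fin (m + 1) → Q) :
    ∑ q, stepP M β ρ q = 1 := by
  unfold stepP
  rw [Finset.sum_comm]
  have : ∀ a ∈ Finset.univ, ∑ q, β.σ (histL ρ) a * M.δ (ρ (Fin.last m)) a q
      = β.σ (histL ρ) a := by
    intro a _
    rw [← Finset.mul_sum, M.sum_one, mul_one]
  rw [Finset.sum_congr rfl this, β.sum_one]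

lemma pathProb_nonneg (M : MDP Q A) {μ0 : Q → ℝ} (hμ0 : ∀ q, 0 ≤ μ0 q) (β : Strat Q A)
    {m : ℕ} (π : Fin (m + 1) → Q) : 0 ≤ pathProb M μ0 β π :=
  mul_nonneg (hμ0 _) (Finset.prod_nonneg fun i _ =>
    Finset.sum_nonneg fun a _ => mul_nonneg (β.nonneg _ _) (M.nonneg _ _ _))

lemma snoc_val {m : ℕ} (ρ : Fin (m + 1) → Q) (q : Q) (x : Fin (m + 2)) (h : x.1 < m + 1) :
    (Fin.snoc ρ q : Fin (m + 2) → Q) x = ρ ⟨x.1, h⟩ := by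
  have hx : x = Fin.castSucc ⟨x.1, h⟩ := by ext; rfl
  conv_lhs => rw [hx]
  rw [Fin.snoc_castSucc]

lemma pathProb_snoc (M : MDP Q A) (μ0 : Q → ℝ) (β : Strat Q A) {m : ℕ}
    (ρ : Fin (m + 1) → Q) (q : Q) :
    pathProb M μ0 β (Fin.snoc ρ q) = pathProb M μ0 β ρ * stepP M β ρ q := by
  unfold pathProb
  rw [Fin.prod_univ_castSucc]
  have h0 : (Fin.snoc ρ q : Fin (m + 2) → Q) 0 = ρ 0 := by
    rw [snoc_val ρ q 0 (by simp)]
    exact congrArg ρ (Fin.ext (by simp))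
  have hmid : ∀ i : Fin m,
      (∑ a, β.σ (List.ofFn (fun j : Fin ((Fin.castSucc i).1 + 1) =>
          (Fin.snoc ρ q : Fin (m + 2) → Q) (⟨(Fin.castSucc i).1 - j.1, by omega⟩ : Fin (m + 2)))) a *
        M.δ ((Fin.snoc ρ q : Fin (m + 2) → Q) (Fin.castSucc i).castSucc) a ((Fin.snoc ρ q : Fin (m + 2) → Q) (Fin.castSucc i).succ))
      = ∑ a, β.σ (List.ofFn (fun j : Fin (i.1 + 1) =>
          ρ (⟨i.1 - j.1, by omega⟩ : Fin (m + 1)))) a *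
        M.δ (ρ i.castSucc) a (ρ i.succ) := by
    intro i
    have h1 : (List.ofFn (fun j : Fin ((Fin.castSucc i).1 + 1) =>
        (Fin.snoc ρ q : Fin (m + 2) → Q) (⟨(Fin.castSucc i).1 - j.1, by omega⟩ : Fin (m + 2))))
        = List.ofFn (fun j : Fin (i.1 + 1) => ρ (⟨i.1 - j.1, by omega⟩ : Fin (m + 1))) := by
      apply List.ext_getElem (by simp)
      intro l h1 h2
      simp only [List.getElem_ofFn]
      rw [snoc_val ρ q _ (by simp at h2 ⊢; omega)]
      exact congrArg ρ (Fin.ext (by simp))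
    have h2 : (Fin.snoc ρ q : Fin (m + 2) → Q) (Fin.castSucc i).castSucc = ρ i.castSucc := by
      rw [snoc_val ρ q _ (by simp)]
      exact congrArg ρ (Fin.ext (by simp))
    have h3 : (Fin.snoc ρ q : Fin (m + 2) → Q) (Fin.castSucc i).succ = ρ i.succ := by
      rw [snoc_val ρ q _ (by simp)]
      exact congrArg ρ (Fin.ext (by simp))
    rw [h1, h2, h3]
  have hlast :
      (∑ a, β.σ (List.ofFn (fun j : Fin ((Fin.last m).1 + 1) =>
          (Fin.snoc ρ q : Fin (m + 2) → Q) (⟨(Fin.last m).1 - j.1, by omega⟩ : Fin (m + 2)))) a *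
        M.δ ((Fin.snoc ρ q : Fin (m + 2) → Q) (Fin.last m).castSucc) a ((Fin.snoc ρ q : Fin (m + 2) → Q) (Fin.last m).succ))
      = stepP M β ρ q := by
    have h1 : (List.ofFn (fun j : Fin ((Fin.last m).1 + 1) =>
        (Fin.snoc ρ q : Fin (m + 2) → Q) (⟨(Fin.last m).1 - j.1, by omega⟩ : Fin (m + 2)))) = histL ρ := by
      apply List.ext_getElem (by simp [histL])
      intro l hh1 hh2
      simp only [List.getElem_ofFn, histL]
      rw [snoc_val ρ q _ (by simp [Fin.last])]
      exact congrArg ρ (Fin.ext (by simp [Fin.last]))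
    have h2 : (Fin.snoc ρ q : Fin (m + 2) → Q) (Fin.last m).castSucc = ρ (Fin.last m) := by
      rw [snoc_val ρ q _ (by simp [Fin.last])]
      exact congrArg ρ (Fin.ext (by simp [Fin.last]))
    have h3 : (Fin.snoc ρ q : Fin (m + 2) → Q) (Fin.last m).succ = q := by
      have : (Fin.last m).succ = Fin.last (m + 1) := by ext; simp [Fin.last]
      rw [this]
      simp
    rw [h1, h2, h3, stepP]
  rw [h0]
  conv_lhs => rw [Finset.prod_congr rfl (fun i _ => hmid i)]
  rw [hlast]
  ring

lemma sum_snoc_decomp {m : ℕ} (f : (Fin (m + 2) → Q) → ℝ) :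
    ∑ π : Fin (m + 2) → Q, f π = ∑ ρ : Fin (m + 1) → Q, ∑ q, f (Fin.snoc ρ q) := by
  rw [← Equiv.sum_comp (Fin.snocEquiv (fun _ => Q)) f, Fintype.sum_prod_type,
    Finset.sum_comm]
  rfl

lemma Mdist_succ (M : MDP Q A) (μ0 : Q → ℝ) (β : Strat Q A) (m : ℕ) (q : Q) :
    Mdist M μ0 β (m + 1) q = ∑ ρ : Fin (m + 1) → Q, pathProb M μ0 β ρ * stepP M β ρ q := by
  rw [Mdist, sum_snoc_decomp]
  apply Finset.sum_congr rfl
  intro ρ _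
  have : ∀ q' : Q, (if (Fin.snoc ρ q' : Fin (m + 2) → Q) (Fin.last (m + 1)) = q then pathProb M μ0 β (Fin.snoc ρ q') else 0)
      = if q' = q then pathProb M μ0 β ρ * stepP M β ρ q' else 0 := by
    intro q'
    rw [Fin.snoc_last, pathProb_snoc]
  rw [Finset.sum_congr rfl (fun q' _ => this q')]
  simp

lemma sum_pathProb (M : MDP Q A) (μ0 : Q → ℝ) (hμ0 : IsDist μ0) (β : Strat Q A) (m : ℕ) :
    ∑ π : Fin (m + 1) → Q, pathProb M μ0 β π = 1 := by
  induction m with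
  | zero =>
    rw [← Equiv.sum_comp (Equiv.funUnique (Fin 1) Q).symm (pathProb M μ0 β)]
    have : ∀ q : Q, pathProb M μ0 β ((Equiv.funUnique (Fin 1) Q).symm q) = μ0 q := by
      intro q
      simp [pathProb, Equiv.funUnique]
    rw [Fintype.sum_congr _ _ this, hμ0.2]
  | succ m ih =>
    rw [sum_snoc_decomp (f := pathProb M μ0 β)]
    have : ∀ ρ : Fin (m + 1) → Q, ∑ q, pathProb M μ0 β (Fin.snoc ρ q) = pathProb M μ0 β ρ := by
      intro ρ
      have : ∀ q : Q, pathProb M μ0 β (Fin.snoc ρ q) = pathProb M μ0 β ρ * stepP M β ρ q :=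
        fun q => pathProb_snoc M μ0 β ρ q
      rw [Fintype.sum_congr _ _ this, ← Finset.mul_sum, sum_stepP, mul_one]
    rw [Fintype.sum_congr _ _ this, ih]

lemma Mdist_nonneg (M : MDP Q A) {μ0 : Q → ℝ} (hμ0 : ∀ q, 0 ≤ μ0 q) (β : Strat Q A) (m : ℕ)
    (q : Q) : 0 ≤ Mdist M μ0 β m q := by
  apply Finset.sum_nonneg
  intro π _
  split
  · exact pathProb_nonneg M hμ0 β π
  · exact le_refl 0

lemma sum_Mdist (M : MDP Q A) (μ0 : Q → ℝ) (hμ0 : IsDist μ0) (β : Strat Q A) (m : ℕ) :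
    ∑ q, Mdist M μ0 β m q = 1 := by
  unfold Mdist
  rw [Finset.sum_comm]
  have : ∀ π ∈ Finset.univ, (∑ q, if π (Fin.last m) = q then pathProb M μ0 β π else 0)
      = pathProb M μ0 β π := by
    intro π _
    simp
  rw [Finset.sum_congr rfl this, sum_pathProb M μ0 hμ0 β m]

lemma Mmass_le_one (M : MDP Q A) (μ0 : Q → ℝ) (hμ0 : IsDist μ0) (β : Strat Q A) (m : ℕ)
    (S : Finset Q) : Mmass M μ0 β m S ≤ 1 := by
  rw [← sum_Mdist M μ0 hμ0 β m]
  exact Finset.sum_le_sum_of_subset_of_nonneg (Finset.subset_univ S)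
    (fun q _ _ => Mdist_nonneg M hμ0.1 β m q)

lemma Mmass_eq_sum_ite (M : MDP Q A) (μ0 : Q → ℝ) (β : Strat Q A) (m : ℕ) (S : Finset Q) :
    Mmass M μ0 β m S = ∑ π : Fin (m + 1) → Q,
      if π (Fin.last m) ∈ S then pathProb M μ0 β π else 0 := by
  rw [Mmass]
  unfold Mdist
  rw [Finset.sum_comm]
  apply Finset.sum_congr rfl
  intro π _
  rw [Finset.sum_ite_eq]

lemma mass_step (M : MDP Q A) (μ0 : Q → ℝ) (hμ0 : IsDist μ0) (β : Strat Q A) (m : ℕ)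
    (S S' : Finset Q)
    (hstep : ∀ ρ : Fin (m + 1) → Q, ρ (Fin.last m) ∈ S → ∑ q ∈ S', stepP M β ρ q = 1) :
    Mmass M μ0 β m S ≤ Mmass M μ0 β (m + 1) S' := by
  rw [Mmass_eq_sum_ite]
  have hrhs : Mmass M μ0 β (m + 1) S'
      = ∑ ρ : Fin (m + 1) → Q, pathProb M μ0 β ρ * ∑ q ∈ S', stepP M β ρ q := by
    rw [Mmass]
    rw [Finset.sum_congr rfl (fun q hq => Mdist_succ M μ0 β m q)]
    rw [Finset.sum_comm]
    apply Finset.sum_congr rfl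
    intro ρ _
    rw [Finset.mul_sum]
  rw [hrhs]
  apply Finset.sum_le_sum
  intro ρ _
  by_cases hS : ρ (Fin.last m) ∈ S
  · rw [if_pos hS, hstep ρ hS, mul_one]
  · rw [if_neg hS]
    exact mul_nonneg (pathProb_nonneg M hμ0.1 β ρ)
      (Finset.sum_nonneg fun q _ => stepP_nonneg M β ρ q)

lemma pathProb_congr (M : MDP Q A) (μ0 : Q → ℝ) (β γ : Strat Q A) {m : ℕ}
    (hσ : ∀ h : List Q, h.length ≤ m → ∀ a, β.σ h a = γ.σ h a)
    (π : Fin (m + 1) → Q) : pathProb M μ0 β π = pathProb M μ0 γ π := by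
  unfold pathProb
  congr 1
  apply Finset.prod_congr rfl
  intro i _
  apply Finset.sum_congr rfl
  intro a _
  rw [hσ _ (by simp) a]

lemma Mmass_congr (M : MDP Q A) (μ0 : Q → ℝ) (β γ : Strat Q A) {m : ℕ}
    (hσ : ∀ h : List Q, h.length ≤ m → ∀ a, β.σ h a = γ.σ h a) (S : Finset Q) :
    Mmass M μ0 β m S = Mmass M μ0 γ m S := by
  unfold Mmass Mdist
  apply Finset.sum_congr rfl
  intro q _
  apply Finset.sum_congr rfl
  intro π _
  rw [pathProb_congr M μ0 β γ hσ π]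

/-! ### The modified strategy -/

lemma mem_PreM {M : MDP Q A} {S : Finset Q} {q : Q} : q ∈ PreM M S ↔ ∃ a, post M q a ⊆ S := by
  simp [PreM]

lemma PreM_mono {M : MDP Q A} {S S' : Finset Q} (h : S ⊆ S') : PreM M S ⊆ PreM M S' := by
  intro q hq
  rw [mem_PreM] at hq ⊢
  obtain ⟨a, ha⟩ := hq
  exact ⟨a, ha.trans h⟩

lemma PreM_iter_mono {M : MDP Q A} {S S' : Finset Q} (h : S ⊆ S') (j : ℕ) :
    (PreM M)^[j] S ⊆ (PreM M)^[j] S' := by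
  induction j with
  | zero => simpa using h
  | succ j ih =>
    rw [Function.iterate_succ_apply', Function.iterate_succ_apply']
    exact PreM_mono ih

noncomputable def pick [Nonempty A] (M : MDP Q A) (S : Finset Q) (q : Q) : A :=
  if h : ∃ a, post M q a ⊆ S then h.choose else Classical.arbitrary A

lemma pick_spec [Nonempty A] {M : MDP Q A} {S : Finset Q} {q : Q} (h : ∃ a, post M q a ⊆ S) :
    post M q (pick M S q) ⊆ S := by
  rw [pick, dif_pos h]
  exact h.choose_spec

open scoped Classical in
noncomputable def act [Nonempty A] (M : MDP Q A) (T U : Finset Q) (q : Q) (j : ℕ) : A :=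
  if q ∈ (PreM M)^[j + 1] T then pick M ((PreM M)^[j] T) q else pick M ((PreM M)^[j] U) q

lemma act_T [Nonempty A] {M : MDP Q A} {T U : Finset Q} {q : Q} {j : ℕ}
    (hq : q ∈ (PreM M)^[j + 1] T) : post M q (act M T U q j) ⊆ (PreM M)^[j] T := by
  rw [act, if_pos hq]
  apply pick_spec
  rw [Function.iterate_succ_apply'] at hq
  exact mem_PreM.mp hq

lemma act_U [Nonempty A] {M : MDP Q A} {T U : Finset Q} (hTU : T ⊆ U) {q : Q} {j : ℕ}
    (hq : q ∈ (PreM M)^[j + 1] U) : post M q (act M T U q j) ⊆ (PreM M)^[j] U := by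
  by_cases hT : q ∈ (PreM M)^[j + 1] T
  · exact (act_T hT).trans (PreM_iter_mono hTU j)
  · rw [act, if_neg hT]
    apply pick_spec
    rw [Function.iterate_succ_apply'] at hq
    exact mem_PreM.mp hq

open scoped Classical in
noncomputable def modStrat [Nonempty Q] [Nonempty A] (M : MDP Q A) (T U : Finset Q) (α : Strat Q A)
    (n k : ℕ) : Strat Q A where
  σ h a := if h.length ≤ n then α.σ h a
    else if a = act M T U (lhead h) (k + n - h.length) then 1 else 0
  nonneg := by
    intro h a
    split
    · exact α.nonneg _ _
    · split <;> norm_num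
  sum_one := by
    intro h
    split
    · exact α.sum_one _
    · simp

lemma sum_delta_of_post_subset {M : MDP Q A} {q : Q} {a : A} {S : Finset Q}
    (h : post M q a ⊆ S) : ∑ q' ∈ S, M.δ q a q' = 1 := by
  rw [← M.sum_one q a]
  apply Finset.sum_subset (Finset.subset_univ S)
  intro x _ hx
  by_contra h'
  have hpos : 0 < M.δ q a x := lt_of_le_of_ne (M.nonneg _ _ _) (Ne.symm h')
  have : x ∈ post M q a := by
    rw [post]
    simp [hpos]
  exact hx (h this)

lemma stepP_modStrat [Nonempty Q] [Nonempty A] (M : MDP Q A) (T U : Finset Q) (α : Strat Q A)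
    (n k : ℕ) {m : ℕ} (hm : n < m + 1) (ρ : Fin (m + 1) → Q) (q' : Q) :
    stepP M (modStrat M T U α n k) ρ q'
      = M.δ (ρ (Fin.last m)) (act M T U (ρ (Fin.last m)) (k + n - (m + 1))) q' := by
  classical
  rw [stepP]
  have hlen : ¬ (histL ρ).length ≤ n := by rw [histL_length]; omega
  have : ∀ a ∈ Finset.univ, (modStrat M T U α n k).σ (histL ρ) a * M.δ (ρ (Fin.last m)) a q'
      = (if a = act M T U (ρ (Fin.last m)) (k + n - (m + 1)) then (1:ℝ) else 0)
          * M.δ (ρ (Fin.last m)) a q' := by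
    intro a _
    simp only [modStrat, histL_lhead, histL_length]
    rw [if_neg (show ¬ m + 1 ≤ n by omega)]
  rw [Finset.sum_congr rfl this]
  simp [Finset.sum_ite_eq']



/-- If `μ0` is limit-sure eventually synchronizing in `R = Pre^k(T)` with support in
`Z = Pre^k(U)` (with `T ⊆ U`), then `μ0` is limit-sure eventually synchronizing in
`T` with support in `U`. -/
theorem limit_sure_of_pre_limit_sure {Q A : Type} [Fintype Q] [DecidableEq Q]
    [Fintype A] [Nonempty Q] [Nonempty A]
    (M : MDP Q A) (T U : Finset Q) (hTU : T ⊆ U)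
    (μ0 : Q → ℝ) (hμ0 : IsDist μ0) (k : ℕ)
    (h : ∀ ε : ℝ, 0 < ε → ∃ (α : Strat Q A) (n : ℕ),
        1 - ε ≤ Mmass M μ0 α n ((PreM M)^[k] T) ∧
          Mmass M μ0 α n ((PreM M)^[k] U) = 1) :
    ∀ ε : ℝ, 0 < ε → ∃ (α : Strat Q A) (n : ℕ),
      1 - ε ≤ Mmass M μ0 α n T ∧ Mmass M μ0 α n U = 1 := by
  intro ε hε
  obtain ⟨α, n, hT, hU⟩ := h ε hε
  set β := modStrat M T U α n k with hβ
  have hagree : ∀ h : List Q, h.length ≤ n → ∀ a, β.σ h a = α.σ h a := by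
    intro h hh a
    simp only [hβ, modStrat, if_pos hh]
  have key : ∀ i, i ≤ k →
      1 - ε ≤ Mmass M μ0 β (n + i) ((PreM M)^[k - i] T) ∧
        Mmass M μ0 β (n + i) ((PreM M)^[k - i] U) = 1 := by
    intro i
    induction i with
    | zero =>
      intro _
      rw [Nat.add_zero, Nat.sub_zero, Mmass_congr M μ0 β α hagree, Mmass_congr M μ0 β α hagree]
      exact ⟨hT, hU⟩
    | succ i ih =>
      intro hik
      obtain ⟨h1, h2⟩ := ih (by omega)
      have harith : k + n - (n + i + 1) = k - (i + 1) := by omega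
      have harith2 : k - (i + 1) + 1 = k - i := by omega
      constructor
      · calc 1 - ε ≤ Mmass M μ0 β (n + i) ((PreM M)^[k - i] T) := h1
          _ ≤ Mmass M μ0 β (n + i + 1) ((PreM M)^[k - (i + 1)] T) := by
            apply mass_step M μ0 hμ0 β (n + i) _ _
            intro ρ hρ
            have hrw := fun q' => stepP_modStrat M T U α n k (by omega) ρ q'
            rw [Finset.sum_congr rfl (fun q' _ => hrw q')]
            apply sum_delta_of_post_subset
            rw [harith]
            apply act_T
            rw [harith2]
            exact hρ
      · apply le_antisymm (Mmass_le_one M μ0 hμ0 β _ _)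
        calc (1:ℝ) = Mmass M μ0 β (n + i) ((PreM M)^[k - i] U) := h2.symm
          _ ≤ Mmass M μ0 β (n + i + 1) ((PreM M)^[k - (i + 1)] U) := by
            apply mass_step M μ0 hμ0 β (n + i) _ _
            intro ρ hρ
            have hrw := fun q' => stepP_modStrat M T U α n k (by omega) ρ q'
            rw [Finset.sum_congr rfl (fun q' _ => hrw q')]
            apply sum_delta_of_post_subset
            rw [harith]
            apply act_U hTU
            rw [harith2]
            exact hρ
  obtain ⟨hT', hU'⟩ := key k le_rfl
  rw [Nat.sub_self, Function.iterate_zero_apply] at hT' hU'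
  exact ⟨β, n + k, hT', hU'⟩
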